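/- Let E(ρ) = Σ_{i∈I} E_i ρ E_iᴴ be a super-operator on d×d complex matrices. For every positive semidefinite d×d matrix ρ, supp(E(ρ)) = ⨆_{i∈I} E_i(supp(ρ)), the linear span of all vectors E_i v with i ∈ I and v ∈ supp(ρ). In particular, the induced action on subspaces V ↦ supp(E(P_V)) (P_V the orthogonal projection onto V) distributes over joins: supp(E(P_{V⊔W})) = supp(E(P_V)) ⊔ supp(E(P_W)) for all subspaces V, W ≤ ℂ^d. -/

import Mathlib

open Matrix ComplexOrder

/-- The super-operator with Kraus operators `(E_i)`: `ρ ↦ Σ_i E_i ρ E_iᴴ`. -/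
noncomputable def superOp {d : ℕ} {I : Type} [Fintype I]
    (E : I → Matrix (Fin d) (Fin d) ℂ) (ρ : Matrix (Fin d) (Fin d) ℂ) :
    Matrix (Fin d) (Fin d) ℂ :=
  ∑ i, E i * ρ * (E i)ᴴ

/-- The support of a matrix, viewed as a subspace of Euclidean space `ℂ^d`:
the range of the associated linear map. -/
noncomputable def msupp {d : ℕ} (ρ : Matrix (Fin d) (Fin d) ℂ) :
    Submodule ℂ (EuclideanSpace ℂ (Fin d)) :=
  LinearMap.range (Matrix.toEuclideanLin ρ)

/-- The matrix of the orthogonal projection onto a subspace `V` of `ℂ^d`. -/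
noncomputable def projMatrix {d : ℕ} (V : Submodule ℂ (EuclideanSpace ℂ (Fin d))) :
    Matrix (Fin d) (Fin d) ℂ :=
  Matrix.toEuclideanLin.symm ((V.subtypeL.comp (Submodule.orthogonalProjection V)).toLinearMap)

namespace SuppSuperOpAux

variable {d : ℕ}

lemma teL_mul (M N : Matrix (Fin d) (Fin d) ℂ) :
    Matrix.toEuclideanLin (M * N)
      = (Matrix.toEuclideanLin M).comp (Matrix.toEuclideanLin N) := by
  apply LinearMap.ext; intro x
  simp [Matrix.toEuclideanLin_apply, Matrix.mulVec_mulVec]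

lemma teL_eq_zero_iff (M : Matrix (Fin d) (Fin d) ℂ) (x : EuclideanSpace ℂ (Fin d)) :
    Matrix.toEuclideanLin M x = 0 ↔ M *ᵥ ((WithLp.equiv 2 (Fin d → ℂ)) x) = 0 := by
  rw [Matrix.toEuclideanLin_apply]
  constructor
  · intro h
    have := congrArg (WithLp.equiv 2 (Fin d → ℂ)) h
    simpa using this
  · intro h; simpa using h

lemma range_orthogonal (M : Matrix (Fin d) (Fin d) ℂ) :
    (LinearMap.range (Matrix.toEuclideanLin M))ᗮ
      = LinearMap.ker (Matrix.toEuclideanLin Mᴴ) := by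
  ext x
  simp only [Submodule.mem_orthogonal, LinearMap.mem_range, LinearMap.mem_ker,
    forall_exists_index]
  constructor
  · intro h
    have h' : ∀ y, (inner ℂ (Matrix.toEuclideanLin M y) x : ℂ) = 0 :=
      fun y => h _ y rfl
    have h'' : ∀ y, (inner ℂ y (Matrix.toEuclideanLin Mᴴ x) : ℂ) = 0 := by
      intro y
      rw [Matrix.toEuclideanLin_conjTranspose_eq_adjoint, LinearMap.adjoint_inner_right]
      exact h' y
    exact inner_self_eq_zero.mp (h'' (Matrix.toEuclideanLin Mᴴ x))
  · intro h u y hy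
    subst hy
    rw [← LinearMap.adjoint_inner_right, ← Matrix.toEuclideanLin_conjTranspose_eq_adjoint,
      h, inner_zero_right]

lemma range_eq_ker_orthogonal (M : Matrix (Fin d) (Fin d) ℂ) :
    LinearMap.range (Matrix.toEuclideanLin M)
      = (LinearMap.ker (Matrix.toEuclideanLin Mᴴ))ᗮ := by
  rw [← range_orthogonal, Submodule.orthogonal_orthogonal]

lemma ker_mul_conjTranspose (M : Matrix (Fin d) (Fin d) ℂ) :
    LinearMap.ker (Matrix.toEuclideanLin (M * Mᴴ))
      = LinearMap.ker (Matrix.toEuclideanLin Mᴴ) := by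
  ext x
  simp only [LinearMap.mem_ker, teL_eq_zero_iff]
  set v := (WithLp.equiv 2 (Fin d → ℂ)) x with hv
  constructor
  · intro h
    have h0 : star v ⬝ᵥ ((M * Mᴴ) *ᵥ v) = 0 := by rw [h, dotProduct_zero]
    rw [← Matrix.mulVec_mulVec, Matrix.dotProduct_mulVec] at h0
    have hsv : star v ᵥ* M = star (Mᴴ *ᵥ v) := by
      rw [Matrix.star_mulVec, Matrix.conjTranspose_conjTranspose]
    rw [hsv] at h0
    exact dotProduct_star_self_eq_zero.mp h0
  · intro h
    rw [← Matrix.mulVec_mulVec, h, Matrix.mulVec_zero]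

lemma range_mul_conjTranspose (M : Matrix (Fin d) (Fin d) ℂ) :
    LinearMap.range (Matrix.toEuclideanLin (M * Mᴴ))
      = LinearMap.range (Matrix.toEuclideanLin M) := by
  have h2 : (M * Mᴴ)ᴴ = M * Mᴴ := by
    rw [Matrix.conjTranspose_mul, Matrix.conjTranspose_conjTranspose]
  rw [range_eq_ker_orthogonal, h2, ker_mul_conjTranspose, ← range_orthogonal,
    Submodule.orthogonal_orthogonal]

open scoped MatrixOrder in
lemma range_psd_conj {ρ : Matrix (Fin d) (Fin d) ℂ} (hρ : ρ.PosSemidef)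
    (F : Matrix (Fin d) (Fin d) ℂ) :
    LinearMap.range (Matrix.toEuclideanLin (F * ρ * Fᴴ))
      = (LinearMap.range (Matrix.toEuclideanLin ρ)).map (Matrix.toEuclideanLin F) := by
  obtain ⟨B, hBpsd, hBB⟩ : ∃ B : Matrix (Fin d) (Fin d) ℂ, B.PosSemidef ∧ B * B = ρ :=
    ⟨CFC.sqrt ρ, (CFC.sqrt_nonneg ρ).posSemidef, CFC.sqrt_mul_sqrt_self ρ hρ.nonneg⟩
  have hBH : Bᴴ = B := hBpsd.1
  have key : F * ρ * Fᴴ = (F * B) * (F * B)ᴴ := by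
    rw [Matrix.conjTranspose_mul, hBH, ← hBB]
    noncomm_ring
  rw [key, range_mul_conjTranspose, teL_mul, LinearMap.range_comp]
  congr 1
  have hρ' : B * Bᴴ = ρ := by rw [hBH, hBB]
  conv_rhs => rw [← hρ']
  rw [range_mul_conjTranspose]

lemma sum_mulVec' {I : Type} [Fintype I] (A : I → Matrix (Fin d) (Fin d) ℂ)
    (v : Fin d → ℂ) : (∑ i, A i) *ᵥ v = ∑ i, A i *ᵥ v := by
  rw [← Matrix.toLin'_apply, map_sum]
  simp [Matrix.toLin'_apply]

variable {I : Type} [Fintype I]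

lemma superOp_posSemidef (E : I → Matrix (Fin d) (Fin d) ℂ)
    {ρ : Matrix (Fin d) (Fin d) ℂ} (hρ : ρ.PosSemidef) :
    (superOp E ρ).PosSemidef := by
  have hA : ∀ i, (E i * ρ * (E i)ᴴ).PosSemidef :=
    fun i => hρ.mul_mul_conjTranspose_same (E i)
  constructor
  · show (superOp E ρ)ᴴ = superOp E ρ
    unfold superOp
    rw [Matrix.conjTranspose_sum]
    exact Finset.sum_congr rfl fun i _ => (hA i).1
  · unfold superOp
    exact (Matrix.posSemidef_sum Finset.univ fun i _ => hA i).2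

lemma ker_superOp (E : I → Matrix (Fin d) (Fin d) ℂ)
    {ρ : Matrix (Fin d) (Fin d) ℂ} (hρ : ρ.PosSemidef) :
    LinearMap.ker (Matrix.toEuclideanLin (superOp E ρ))
      = ⨅ i, LinearMap.ker (Matrix.toEuclideanLin (E i * ρ * (E i)ᴴ)) := by
  have hA : ∀ i, (E i * ρ * (E i)ᴴ).PosSemidef :=
    fun i => hρ.mul_mul_conjTranspose_same (E i)
  ext x
  simp only [LinearMap.mem_ker, Submodule.mem_iInf, teL_eq_zero_iff]
  set v := (WithLp.equiv 2 (Fin d → ℂ)) x with hv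
  unfold superOp
  rw [sum_mulVec']
  constructor
  · intro h i
    have h0 : ∑ j, star v ⬝ᵥ ((E j * ρ * (E j)ᴴ) *ᵥ v) = 0 := by
      have : star v ⬝ᵥ ∑ j, (E j * ρ * (E j)ᴴ) *ᵥ v
          = ∑ j, star v ⬝ᵥ ((E j * ρ * (E j)ᴴ) *ᵥ v) := by
        simp [dotProduct, Finset.mul_sum, Finset.sum_apply]
        rw [Finset.sum_comm]
      rw [← this, h, dotProduct_zero]
    have hz := (Finset.sum_eq_zero_iff_of_nonneg
      (fun j _ => (hA j).dotProduct_mulVec_nonneg v)).mp h0 i (Finset.mem_univ i)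
    exact ((hA i).dotProduct_mulVec_zero_iff v).mp hz
  · intro h
    exact Finset.sum_eq_zero fun i _ => h i

lemma part1 (E : I → Matrix (Fin d) (Fin d) ℂ)
    (ρ : Matrix (Fin d) (Fin d) ℂ) (hρ : ρ.PosSemidef) :
    msupp (superOp E ρ) = ⨆ i, (msupp ρ).map (Matrix.toEuclideanLin (E i)) := by
  have hA : ∀ i, (E i * ρ * (E i)ᴴ).PosSemidef :=
    fun i => hρ.mul_mul_conjTranspose_same (E i)
  have hS : (superOp E ρ).PosSemidef := superOp_posSemidef E hρ
  have h1 : msupp (superOp E ρ)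
      = (LinearMap.ker (Matrix.toEuclideanLin (superOp E ρ)))ᗮ := by
    rw [msupp, range_eq_ker_orthogonal, hS.1]
  have h2 : ∀ i, LinearMap.ker (Matrix.toEuclideanLin (E i * ρ * (E i)ᴴ))
      = ((msupp ρ).map (Matrix.toEuclideanLin (E i)))ᗮ := by
    intro i
    simp only [msupp]
    rw [← range_psd_conj hρ (E i), range_orthogonal, (hA i).1]
  rw [h1, ker_superOp E hρ]
  have h3 : (⨅ i, LinearMap.ker (Matrix.toEuclideanLin (E i * ρ * (E i)ᴴ)))
      = (⨆ i, (msupp ρ).map (Matrix.toEuclideanLin (E i)))ᗮ := by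
    rw [← Submodule.iInf_orthogonal]
    exact iInf_congr h2
  rw [h3, Submodule.orthogonal_orthogonal]

lemma teL_projMatrix (V : Submodule ℂ (EuclideanSpace ℂ (Fin d))) :
    Matrix.toEuclideanLin (projMatrix V)
      = (V.subtypeL.comp (Submodule.orthogonalProjection V)).toLinearMap :=
  Matrix.toEuclideanLin.apply_symm_apply _

lemma projMatrix_posSemidef (V : Submodule ℂ (EuclideanSpace ℂ (Fin d))) :
    (projMatrix V).PosSemidef := by
  suffices hB : ∃ B, projMatrix V = Bᴴ * B by
    obtain ⟨B, hB⟩ := hB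
    rw [hB]
    exact Matrix.posSemidef_conjTranspose_mul_self B
  refine ⟨projMatrix V, ?_⟩
  apply Matrix.toEuclideanLin.injective
  rw [teL_mul, Matrix.toEuclideanLin_conjTranspose_eq_adjoint, teL_projMatrix]
  set T := V.subtypeL.comp (Submodule.orthogonalProjection V) with hT
  have hadj : LinearMap.adjoint (T.toLinearMap) = T.toLinearMap := by
    symm
    rw [LinearMap.eq_adjoint_iff]
    intro x y
    exact Submodule.inner_starProjection_left_eq_right V x y
  rw [hadj]
  apply LinearMap.ext; intro x
  show T x = T (T x)
  simp only [hT, ContinuousLinearMap.comp_apply, Submodule.subtypeL_apply]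
  rw [Submodule.orthogonalProjection_mem_subspace_eq_self]

lemma msupp_projMatrix (V : Submodule ℂ (EuclideanSpace ℂ (Fin d))) :
    msupp (projMatrix V) = V := by
  rw [msupp, teL_projMatrix]
  ext x
  simp only [LinearMap.mem_range, ContinuousLinearMap.coe_coe,
    ContinuousLinearMap.comp_apply, Submodule.subtypeL_apply]
  constructor
  · rintro ⟨y, rfl⟩
    exact (Submodule.orthogonalProjection V y).2
  · intro hx
    exact ⟨x, Submodule.starProjection_eq_self_iff.mpr hx⟩

end SuppSuperOpAux

/-- `supp(E(ρ)) = ⨆_i E_i(supp ρ)` for every positive semidefinite `ρ`; in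
particular, the induced action on subspaces `V ↦ supp(E(P_V))` distributes over joins. -/
theorem supp_superOp_eq_iSup_map {d : ℕ} {I : Type} [Fintype I]
    (E : I → Matrix (Fin d) (Fin d) ℂ) :
    (∀ ρ : Matrix (Fin d) (Fin d) ℂ, ρ.PosSemidef →
      msupp (superOp E ρ) = ⨆ i, (msupp ρ).map (Matrix.toEuclideanLin (E i))) ∧
    (∀ V W : Submodule ℂ (EuclideanSpace ℂ (Fin d)),
      msupp (superOp E (projMatrix (V ⊔ W)))
        = msupp (superOp E (projMatrix V)) ⊔ msupp (superOp E (projMatrix W))) := by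
  refine ⟨fun ρ hρ => SuppSuperOpAux.part1 E ρ hρ, fun V W => ?_⟩
  rw [SuppSuperOpAux.part1 E _ (SuppSuperOpAux.projMatrix_posSemidef _),
    SuppSuperOpAux.part1 E _ (SuppSuperOpAux.projMatrix_posSemidef _),
    SuppSuperOpAux.part1 E _ (SuppSuperOpAux.projMatrix_posSemidef _),
    SuppSuperOpAux.msupp_projMatrix, SuppSuperOpAux.msupp_projMatrix,
    SuppSuperOpAux.msupp_projMatrix]
  simp_rw [Submodule.map_sup]
  exact iSup_sup_eq
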